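/- (Corollary 2, linearity of the value function.) Suppose the rewards are induced by state-dependent rewards: there are functions R_T : S → ℝ and R_t : S × A → ℝ for t = 0, …, T−1 such that ρ_T(b) = Σ_s b(s) · R_T(s) and ρ_t(b, a) = Σ_s b(s) · R_t(s, a) for all beliefs b. Then for every t ∈ {0, …, T−1} and every node q ∈ Q_t there exists a function α_{t,q} : S → ℝ such that V_t(b, q) = Σ_s b(s) · α_{t,q}(s) for all b ∈ Δ(S); i.e., each value function V_t(·, q) is linear in the belief. -/

import Mathlib

/-- The standard probability simplex Δ(S) of beliefs over a finite state set `S`. -/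
def simplex (S : Type*) [Fintype S] : Set (S → ℝ) :=
  {b | (∀ s, 0 ≤ b s) ∧ ∑ s, b s = 1}

/-- Observation likelihood `η(b, z)` for transition kernel `Ps` and observation kernel `Pz`. -/
noncomputable def eta {S Z : Type*} [Fintype S] (Ps : S → S → ℝ) (Pz : S → Z → ℝ)
    (b : S → ℝ) (z : Z) : ℝ :=
  ∑ s', Pz s' z * ∑ s, Ps s s' * b s

/-- Bayes posterior `ζ(b, z)` for transition kernel `Ps` and observation kernel `Pz`. -/
noncomputable def zeta {S Z : Type*} [Fintype S] (Ps : S → S → ℝ) (Pz : S → Z → ℝ)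
    (b : S → ℝ) (z : Z) : S → ℝ :=
  fun s' => Pz s' z * (∑ s, Ps s s' * b s) / eta Ps Pz b z

lemma eta_pos {S Z : Type*} [Fintype S] (Ps : S → S → ℝ) (Pz : S → Z → ℝ)
    (hPs0 : ∀ s s', 0 ≤ Ps s s') (hPs1 : ∀ s, ∑ s', Ps s s' = 1)
    (hPz0 : ∀ s' z, 0 < Pz s' z) (b : S → ℝ) (hb : b ∈ simplex S) (z : Z) :
    0 < eta Ps Pz b z := by
  obtain ⟨hb0, hb1⟩ := hb
  have hc0 : ∀ s', 0 ≤ ∑ s, Ps s s' * b s := fun s' =>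
    Finset.sum_nonneg fun s _ => mul_nonneg (hPs0 s s') (hb0 s)
  have hcsum : ∑ s', ∑ s, Ps s s' * b s = 1 := by
    rw [Finset.sum_comm]
    calc ∑ s, ∑ s', Ps s s' * b s = ∑ s, (∑ s', Ps s s') * b s := by
          simp [Finset.sum_mul]
      _ = 1 := by simp [hPs1, hb1]
  have : ∃ s' : S, s' ∈ Finset.univ ∧ 0 < ∑ s, Ps s s' * b s := by
    by_contra h
    push_neg at h
    have : ∑ s' : S, ∑ s, Ps s s' * b s = 0 :=
      Finset.sum_eq_zero fun s' _ => le_antisymm (h s' (Finset.mem_univ s')) (hc0 s')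
    simp [this] at hcsum
  obtain ⟨s', _, hs'⟩ := this
  exact Finset.sum_pos' (fun x _ => mul_nonneg (hPz0 x z).le (hc0 x))
    ⟨s', Finset.mem_univ s', mul_pos (hPz0 s' z) hs'⟩

lemma zeta_mem {S Z : Type*} [Fintype S] (Ps : S → S → ℝ) (Pz : S → Z → ℝ)
    (hPs0 : ∀ s s', 0 ≤ Ps s s') (hPs1 : ∀ s, ∑ s', Ps s s' = 1)
    (hPz0 : ∀ s' z, 0 < Pz s' z) (b : S → ℝ) (hb : b ∈ simplex S) (z : Z) :
    zeta Ps Pz b z ∈ simplex S := by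
  have he := eta_pos Ps Pz hPs0 hPs1 hPz0 b hb z
  obtain ⟨hb0, _⟩ := hb
  constructor
  · intro s'
    exact div_nonneg (mul_nonneg (hPz0 s' z).le
      (Finset.sum_nonneg fun s _ => mul_nonneg (hPs0 s s') (hb0 s))) he.le
  · unfold zeta
    rw [← Finset.sum_div, div_eq_one_iff_eq he.ne']
    rfl

lemma eta_mul_sum_zeta {S Z : Type*} [Fintype S] (Ps : S → S → ℝ) (Pz : S → Z → ℝ)
    (b : S → ℝ) (z : Z) (he : eta Ps Pz b z ≠ 0) (α : S → ℝ) :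
    eta Ps Pz b z * ∑ s', zeta Ps Pz b z s' * α s' =
      ∑ s, b s * ∑ s', Ps s s' * (Pz s' z * α s') := by
  have h1 : eta Ps Pz b z * ∑ s', zeta Ps Pz b z s' * α s' =
      ∑ s', Pz s' z * (∑ s, Ps s s' * b s) * α s' := by
    rw [Finset.mul_sum]
    refine Finset.sum_congr rfl fun s' _ => ?_
    unfold zeta
    field_simp
  rw [h1]
  have h2 : ∀ s' : S, Pz s' z * (∑ s, Ps s s' * b s) * α s' =
      ∑ s, b s * (Ps s s' * (Pz s' z * α s')) := by
    intro s'
    rw [Finset.mul_sum, Finset.sum_mul]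
    exact Finset.sum_congr rfl fun s _ => by ring
  simp only [h2]
  rw [Finset.sum_comm]
  exact Finset.sum_congr rfl fun s _ => by rw [Finset.mul_sum]

/-- **Corollary 2 (linearity of the value function).** If the rewards are induced by
state-dependent rewards `R_T : S → ℝ` and `R_t : S × A → ℝ`, then each value function
`V_t(·, q)` is a linear function of the belief on `Δ(S)`. -/
theorem value_function_linear_of_state_dependent_rewards
    {S Z A : Type*} [Fintype S] [Fintype Z] [Fintype A]
    [Nonempty S] [Nonempty Z] [Nonempty A]
    (Ps : A → S → S → ℝ) (Pz : A → S → Z → ℝ)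
    (hPs0 : ∀ a s s', 0 ≤ Ps a s s') (hPs1 : ∀ a s, ∑ s', Ps a s s' = 1)
    (hPz0 : ∀ a s' z, 0 < Pz a s' z) (hPz1 : ∀ a s', ∑ z, Pz a s' z = 1)
    (T : ℕ) (hT : 1 ≤ T)
    (Q : ℕ → Type) [∀ t, Nonempty (Q t)]
    (γ : ∀ t, Q t → A) (lam : ∀ t, Q t → Z → Q (t + 1))
    (ρ : ℕ → (S → ℝ) → A → ℝ) (ρT : (S → ℝ) → ℝ)
    (RT : S → ℝ) (R : ℕ → S → A → ℝ)
    (hρT : ∀ b ∈ simplex S, ρT b = ∑ s, b s * RT s)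
    (hρ : ∀ t < T, ∀ a : A, ∀ b ∈ simplex S, ρ t b a = ∑ s, b s * R t s a)
    (V : ∀ t, (S → ℝ) → Q t → ℝ)
    (hVlast : ∀ (b : S → ℝ) (q : Q (T - 1)),
      V (T - 1) b q = ρ (T - 1) b (γ (T - 1) q) +
        ∑ z, eta (Ps (γ (T - 1) q)) (Pz (γ (T - 1) q)) b z *
          ρT (zeta (Ps (γ (T - 1) q)) (Pz (γ (T - 1) q)) b z))
    (hVstep : ∀ t, t < T - 1 → ∀ (b : S → ℝ) (q : Q t),
      V t b q = ρ t b (γ t q) +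
        ∑ z, eta (Ps (γ t q)) (Pz (γ t q)) b z *
          V (t + 1) (zeta (Ps (γ t q)) (Pz (γ t q)) b z) (lam t q z)) :
    ∀ t < T, ∀ q : Q t, ∃ α : S → ℝ,
      ∀ b ∈ simplex S, V t b q = ∑ s, b s * α s := by
  have key : ∀ k t, t + k = T - 1 → ∀ q : Q t, ∃ α : S → ℝ,
      ∀ b ∈ simplex S, V t b q = ∑ s, b s * α s := by
    intro k
    induction k with
    | zero =>
      intro t ht q
      have ht' : t = T - 1 := by omega
      subst ht'
      set a := γ (T - 1) q with ha
      refine ⟨fun s => R (T - 1) s a +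
        ∑ z, ∑ s', Ps a s s' * (Pz a s' z * RT s'), fun b hb => ?_⟩
      rw [hVlast b q, hρ (T - 1) (by omega) a b hb]
      have hz : ∀ z : Z, eta (Ps a) (Pz a) b z * ρT (zeta (Ps a) (Pz a) b z) =
          ∑ s, b s * ∑ s', Ps a s s' * (Pz a s' z * RT s') := by
        intro z
        rw [hρT _ (zeta_mem (Ps a) (Pz a) (hPs0 a) (hPs1 a) (hPz0 a) b hb z)]
        exact eta_mul_sum_zeta (Ps a) (Pz a) b z
          (eta_pos (Ps a) (Pz a) (hPs0 a) (hPs1 a) (hPz0 a) b hb z).ne' RT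
      simp only [← ha, hz]
      rw [Finset.sum_comm, ← Finset.sum_add_distrib]
      exact Finset.sum_congr rfl fun s _ => by rw [← Finset.mul_sum, ← mul_add]
    | succ k ih =>
      intro t ht q
      have htlt : t < T - 1 := by omega
      set a := γ t q with ha
      choose β hβ using fun z : Z => ih (t + 1) (by omega) (lam t q z)
      refine ⟨fun s => R t s a +
        ∑ z, ∑ s', Ps a s s' * (Pz a s' z * β z s'), fun b hb => ?_⟩
      rw [hVstep t htlt b q, hρ t (by omega) a b hb]
      have hz : ∀ z : Z, eta (Ps a) (Pz a) b z *
          V (t + 1) (zeta (Ps a) (Pz a) b z) (lam t q z) =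
          ∑ s, b s * ∑ s', Ps a s s' * (Pz a s' z * β z s') := by
        intro z
        rw [hβ z _ (zeta_mem (Ps a) (Pz a) (hPs0 a) (hPs1 a) (hPz0 a) b hb z)]
        exact eta_mul_sum_zeta (Ps a) (Pz a) b z
          (eta_pos (Ps a) (Pz a) (hPs0 a) (hPs1 a) (hPz0 a) b hb z).ne' (β z)
      simp only [← ha, hz]
      rw [Finset.sum_comm, ← Finset.sum_add_distrib]
      exact Finset.sum_congr rfl fun s _ => by rw [← Finset.mul_sum, ← mul_add]
  intro t htT q
  exact key (T - 1 - t) t (by omega) q
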